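/- If X and Y are independent random variables with mean 0 and variance 1, and Z is standard normal, then W₂((X+Y)/√2, Z)² ≤ (W₂(X,Z)² + W₂(Y,Z)²)/2. -/

import Mathlib

open MeasureTheory ProbabilityTheory Filter Set

/-- Quantile function (generalized inverse CDF) of a measure on ℝ. -/
noncomputable def qtl (μ : Measure ℝ) (t : ℝ) : ℝ :=
  sInf {x : ℝ | t ≤ (μ (Set.Iic x)).toReal}

/-- Lebesgue measure on (0,1). -/
noncomputable def unif01 : Measure ℝ := volume.restrict (Set.Ioo 0 1)

/-- Squared 2-Wasserstein distance: infimum of E[(X'-Y')²] over couplings. -/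
noncomputable def W2sq (μ ν : Measure ℝ) : ℝ :=
  sInf { r : ℝ | ∃ π : Measure (ℝ × ℝ), IsProbabilityMeasure π ∧
    π.map Prod.fst = μ ∧ π.map Prod.snd = ν ∧ r = ∫ p, (p.1 - p.2) ^ 2 ∂π }

/-- 2-Wasserstein distance. -/
noncomputable def W2 (μ ν : Measure ℝ) : ℝ := Real.sqrt (W2sq μ ν)

/-- Convergence in distribution: CDFs converge at continuity points of the limit CDF. -/
def ConvDist (μs : ℕ → Measure ℝ) (μ : Measure ℝ) : Prop :=
  ∀ x : ℝ, ContinuousAt (fun y => (μ (Set.Iic y)).toReal) x →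
    Filter.Tendsto (fun n => (μs n (Set.Iic x)).toReal) Filter.atTop
      (nhds ((μ (Set.Iic x)).toReal))


section AuxProofs
open Real
open scoped ENNReal NNReal

lemma aux_map_withDensity {α β : Type*} [MeasurableSpace α] [MeasurableSpace β]
    (μ : Measure α) {f : α → β} (hf : Measurable f) {g : β → ℝ≥0∞} (hg : Measurable g) :
    (μ.withDensity (fun x => g (f x))).map f = (μ.map f).withDensity g := by
  ext s hs
  rw [Measure.map_apply hf hs, withDensity_apply _ (hf hs), withDensity_apply _ hs,
    setLIntegral_map hs hg hf]

lemma aux_withDensity_prod {α β : Type*} [MeasurableSpace α] [MeasurableSpace β]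
    (μ : Measure α) (ν : Measure β) [SigmaFinite μ] [SigmaFinite ν]
    {f : α → ℝ≥0∞} {g : β → ℝ≥0∞} (hf : Measurable f) (hg : Measurable g) :
    (μ.withDensity f).prod (ν.withDensity g)
      = (μ.prod ν).withDensity (fun p => f p.1 * g p.2) := by
  ext s hs
  rw [Measure.prod_apply hs, withDensity_apply _ hs]
  have hind : ∀ x y, s.indicator (fun p : α × β => f p.1 * g p.2) (x, y)
      = f x * (Prod.mk x ⁻¹' s).indicator g y := by
    intro x y
    by_cases h : (x, y) ∈ s <;> simp [Set.indicator, h, Set.mem_preimage]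
  calc ∫⁻ x, (ν.withDensity g) (Prod.mk x ⁻¹' s) ∂(μ.withDensity f)
      = ∫⁻ x, f x * (ν.withDensity g) (Prod.mk x ⁻¹' s) ∂μ := by
        rw [lintegral_withDensity_eq_lintegral_mul _ hf
          (measurable_measure_prodMk_left hs)]
        rfl
    _ = ∫⁻ x, ∫⁻ y, s.indicator (fun p : α × β => f p.1 * g p.2) (x, y) ∂ν ∂μ := by
        refine lintegral_congr fun x => ?_
        simp_rw [hind x]
        rw [lintegral_const_mul _ (hg.indicator (measurable_prodMk_left hs)),
          lintegral_indicator (measurable_prodMk_left hs) _,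
          withDensity_apply _ (measurable_prodMk_left hs)]
    _ = ∫⁻ p, s.indicator (fun p : α × β => f p.1 * g p.2) p ∂(μ.prod ν) :=
        (lintegral_prod _ (((hf.comp measurable_fst).mul
          (hg.comp measurable_snd)).indicator hs).aemeasurable).symm
    _ = ∫⁻ p in s, f p.1 * g p.2 ∂(μ.prod ν) := lintegral_indicator hs _

lemma aux_shear (c : ℝ) : MeasurePreserving (fun p : ℝ × ℝ => (p.1, p.2 + c * p.1))
    ((volume : Measure ℝ).prod volume) ((volume : Measure ℝ).prod volume) :=
  MeasurePreserving.skew_product (g := fun x y => y + c * x) (MeasurePreserving.id volume)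
    (measurable_snd.add (measurable_fst.const_mul c))
    (Filter.Eventually.of_forall fun x => map_add_right_eq_self volume (c * x))

lemma aux_shear' (c : ℝ) : MeasurePreserving (fun p : ℝ × ℝ => (p.1 + c * p.2, p.2))
    ((volume : Measure ℝ).prod volume) ((volume : Measure ℝ).prod volume) :=
  Measure.measurePreserving_swap.comp ((aux_shear c).comp Measure.measurePreserving_swap)

lemma aux_rot : MeasurePreserving (fun p : ℝ × ℝ => ((p.1 + p.2) / √2, (p.2 - p.1) / √2))
    ((volume : Measure ℝ).prod volume) ((volume : Measure ℝ).prod volume) := by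
  have h2 : √2 * √2 = 2 := Real.mul_self_sqrt (by norm_num)
  have h0 : √2 ≠ 0 := by positivity
  have h := (aux_shear' (√2 - 1)).comp ((aux_shear (-(√2)⁻¹)).comp (aux_shear' (√2 - 1)))
  have hfun : (fun p : ℝ × ℝ => ((p.1 + p.2) / √2, (p.2 - p.1) / √2))
      = (fun p : ℝ × ℝ => (p.1 + (√2 - 1) * p.2, p.2))
        ∘ ((fun p : ℝ × ℝ => (p.1, p.2 + (-(√2)⁻¹) * p.1))
        ∘ (fun p : ℝ × ℝ => (p.1 + (√2 - 1) * p.2, p.2))) := by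
    funext p
    simp only [Function.comp_apply]
    refine Prod.ext ?_ ?_ <;> field_simp <;> ring_nf
    linear_combination (-p.2) * h2
  rw [hfun]
  exact h

lemma aux_pdf_mul (u v : ℝ) : gaussianPDF 0 1 u * gaussianPDF 0 1 v
    = ENNReal.ofReal ((√(2 * π))⁻¹ * (√(2 * π))⁻¹ * rexp (-(u ^ 2 + v ^ 2) / 2)) := by
  rw [gaussianPDF, gaussianPDF, ← ENNReal.ofReal_mul (gaussianPDFReal_nonneg _ _ _)]
  congr 1
  simp only [gaussianPDFReal, NNReal.coe_one, mul_one, sub_zero]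
  rw [show (-(u ^ 2 + v ^ 2) / 2 : ℝ) = -u ^ 2 / 2 + -v ^ 2 / 2 by ring, Real.exp_add]
  ring

lemma aux_gauss_conv : (((gaussianReal 0 1)).prod (gaussianReal 0 1)).map
    (fun p : ℝ × ℝ => (p.1 + p.2) / √2) = gaussianReal 0 1 := by
  have h2 : √2 * √2 = 2 := Real.mul_self_sqrt (by norm_num)
  have h0 : √2 ≠ 0 := by positivity
  have hG : gaussianReal 0 1 = volume.withDensity (gaussianPDF 0 1) :=
    gaussianReal_of_var_ne_zero 0 one_ne_zero
  set R : ℝ × ℝ → ℝ × ℝ := fun p => ((p.1 + p.2) / √2, (p.2 - p.1) / √2) with hR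
  have hRm : Measurable R := by fun_prop
  have hφm : Measurable (fun p : ℝ × ℝ => gaussianPDF 0 1 p.1 * gaussianPDF 0 1 p.2) :=
    ((measurable_gaussianPDF 0 1).comp measurable_fst).mul
      ((measurable_gaussianPDF 0 1).comp measurable_snd)
  have hprod : (gaussianReal 0 1).prod (gaussianReal 0 1)
      = ((volume : Measure ℝ).prod volume).withDensity
        (fun p => gaussianPDF 0 1 p.1 * gaussianPDF 0 1 p.2) := by
    rw [hG, aux_withDensity_prod _ _ (measurable_gaussianPDF 0 1) (measurable_gaussianPDF 0 1)]
  have hinv : (fun p : ℝ × ℝ => gaussianPDF 0 1 p.1 * gaussianPDF 0 1 p.2)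
      = fun p : ℝ × ℝ => gaussianPDF 0 1 (R p).1 * gaussianPDF 0 1 (R p).2 := by
    funext p
    rw [aux_pdf_mul, aux_pdf_mul]
    congr 3
    have : ((p.1 + p.2) / √2) ^ 2 + ((p.2 - p.1) / √2) ^ 2 = p.1 ^ 2 + p.2 ^ 2 := by
      field_simp
      ring_nf
      rw [Real.sq_sqrt (by norm_num)]
    simp only [hR]
    rw [this]
  have hmapR : ((gaussianReal 0 1).prod (gaussianReal 0 1)).map R
      = (gaussianReal 0 1).prod (gaussianReal 0 1) := by
    rw [hprod]
    conv_lhs => rw [hinv]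
    rw [aux_map_withDensity _ hRm hφm, aux_rot.map_eq]
  have : (fun p : ℝ × ℝ => (p.1 + p.2) / √2) = Prod.fst ∘ R := rfl
  rw [this, ← Measure.map_map measurable_fst hRm, hmapR, Measure.map_fst_prod]
  simp

lemma aux_memLp_gauss : MemLp (id : ℝ → ℝ) 2 (gaussianReal 0 1) := by
  rw [memLp_two_iff_integrable_sq aestronglyMeasurable_id,
    gaussianReal_of_var_ne_zero 0 one_ne_zero,
    integrable_withDensity_iff (measurable_gaussianPDF 0 1)
      (Filter.Eventually.of_forall fun x => ENNReal.ofReal_lt_top)]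
  have h := (integrable_rpow_mul_exp_neg_mul_sq (b := (2 : ℝ)⁻¹) (by norm_num)
    (s := 2) (by norm_num)).const_mul ((√(2 * π))⁻¹)
  refine h.congr (Filter.Eventually.of_forall fun x => ?_)
  simp only [gaussianPDF_def]
  rw [ENNReal.toReal_ofReal (gaussianPDFReal_nonneg _ _ _)]
  simp only [gaussianPDFReal, NNReal.coe_one, mul_one, sub_zero, id_eq]
  rw [Real.rpow_two]
  ring_nf

lemma aux_integral_id_gauss : ∫ x, x ∂(gaussianReal 0 1) = 0 := by
  have hmap : (gaussianReal 0 1).map (fun x : ℝ => (-1 : ℝ) * x) = gaussianReal 0 1 := by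
    have h := gaussianReal_map_const_mul (μ := 0) (v := 1) (-1)
    have : (⟨(-1 : ℝ) ^ 2, sq_nonneg _⟩ : ℝ≥0) * 1 = 1 := by
      ext; norm_num
    rw [h]
    congr 1
    · norm_num
  have h1 : ∫ x, x ∂(gaussianReal 0 1)
      = ∫ x, x ∂((gaussianReal 0 1).map (fun x : ℝ => (-1 : ℝ) * x)) := by rw [hmap]
  rw [integral_map (f := fun x : ℝ => x) (by fun_prop) aestronglyMeasurable_id] at h1
  simp only [neg_one_mul, id_eq] at h1
  rw [integral_neg] at h1
  linarith

lemma aux_coupling {μ ν : Measure ℝ} (ρ : Measure (ℝ × ℝ)) [IsProbabilityMeasure ρ]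
    (h1 : ρ.map Prod.fst = μ) (h2 : ρ.map Prod.snd = ν)
    (hμ2 : MemLp (id : ℝ → ℝ) 2 μ) (hν2 : MemLp (id : ℝ → ℝ) 2 ν)
    (hμm : ∫ x, x ∂μ = 0) (hνm : ∫ x, x ∂ν = 0) :
    MemLp (fun p : ℝ × ℝ => p.1 - p.2) 2 ρ ∧ (∫ p : ℝ × ℝ, (p.1 - p.2) ∂ρ) = 0 := by
  have hf : MemLp (fun p : ℝ × ℝ => p.1) 2 ρ := by
    have := (memLp_map_measure_iff aestronglyMeasurable_id
      measurable_fst.aemeasurable).mp (h1 ▸ hμ2)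
    exact this
  have hs : MemLp (fun p : ℝ × ℝ => p.2) 2 ρ := by
    have := (memLp_map_measure_iff aestronglyMeasurable_id
      measurable_snd.aemeasurable).mp (h2 ▸ hν2)
    exact this
  refine ⟨hf.sub hs, ?_⟩
  rw [integral_sub (hf.integrable one_le_two) (hs.integrable one_le_two)]
  have e1 : ∫ p : ℝ × ℝ, p.1 ∂ρ = ∫ x, x ∂μ := by
    rw [← h1, integral_map (f := fun x : ℝ => x) measurable_fst.aemeasurable
      aestronglyMeasurable_id]
  have e2 : ∫ p : ℝ × ℝ, p.2 ∂ρ = ∫ x, x ∂ν := by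
    rw [← h2, integral_map (f := fun x : ℝ => x) measurable_snd.aemeasurable
      aestronglyMeasurable_id]
  rw [e1, e2, hμm, hνm, sub_zero]

lemma aux_cost (π₁ π₂ : Measure (ℝ × ℝ)) [IsProbabilityMeasure π₁] [IsProbabilityMeasure π₂]
    (hm₁ : MemLp (fun p : ℝ × ℝ => p.1 - p.2) 2 π₁)
    (hm₂ : MemLp (fun p : ℝ × ℝ => p.1 - p.2) 2 π₂)
    (hz₁ : (∫ p : ℝ × ℝ, (p.1 - p.2) ∂π₁) = 0)
    (hz₂ : (∫ p : ℝ × ℝ, (p.1 - p.2) ∂π₂) = 0) :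
    ∫ q : (ℝ × ℝ) × (ℝ × ℝ), ((q.1.1 + q.2.1) / √2 - (q.1.2 + q.2.2) / √2) ^ 2 ∂(π₁.prod π₂)
      = ((∫ p : ℝ × ℝ, (p.1 - p.2) ^ 2 ∂π₁) + ∫ p : ℝ × ℝ, (p.1 - p.2) ^ 2 ∂π₂) / 2 := by
  have h2 : √2 * √2 = 2 := Real.mul_self_sqrt (by norm_num)
  have h0 : √2 ≠ 0 := by positivity
  have key : ∀ q : (ℝ × ℝ) × (ℝ × ℝ), ((q.1.1 + q.2.1) / √2 - (q.1.2 + q.2.2) / √2) ^ 2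
      = ((q.1.1 - q.1.2) ^ 2 * 1 + (q.1.1 - q.1.2) * (2 * (q.2.1 - q.2.2))
          + 1 * (q.2.1 - q.2.2) ^ 2) / 2 := by
    intro q
    field_simp
    ring_nf
    rw [Real.sq_sqrt (by norm_num : (0:ℝ) ≤ 2)]
    ring
  simp_rw [key]
  have i1 : Integrable (fun q : (ℝ × ℝ) × (ℝ × ℝ) => (q.1.1 - q.1.2) ^ 2 * 1) (π₁.prod π₂) :=
    hm₁.integrable_sq.mul_prod (integrable_const 1)
  have i2 : Integrable (fun q : (ℝ × ℝ) × (ℝ × ℝ) =>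
      (q.1.1 - q.1.2) * (2 * (q.2.1 - q.2.2))) (π₁.prod π₂) :=
    (hm₁.integrable one_le_two).mul_prod ((hm₂.integrable one_le_two).const_mul 2)
  have i3 : Integrable (fun q : (ℝ × ℝ) × (ℝ × ℝ) => 1 * (q.2.1 - q.2.2) ^ 2) (π₁.prod π₂) :=
    (integrable_const 1).mul_prod hm₂.integrable_sq
  have iAB : Integrable (fun q : (ℝ × ℝ) × (ℝ × ℝ) => (q.1.1 - q.1.2) ^ 2 * 1
      + (q.1.1 - q.1.2) * (2 * (q.2.1 - q.2.2))) (π₁.prod π₂) := i1.add i2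
  rw [integral_div, integral_add iAB i3, integral_add i1 i2,
    integral_prod_mul (fun p : ℝ × ℝ => (p.1 - p.2) ^ 2) (fun _ => (1 : ℝ)),
    integral_prod_mul (fun p : ℝ × ℝ => p.1 - p.2) (fun p : ℝ × ℝ => 2 * (p.1 - p.2)),
    integral_prod_mul (fun _ => (1 : ℝ)) (fun p : ℝ × ℝ => (p.1 - p.2) ^ 2)]
  simp [hz₁, hz₂, measure_univ]

/-- The coupling set. -/
def Cset (μ ν : Measure ℝ) : Set ℝ :=
  { r : ℝ | ∃ ρ : Measure (ℝ × ℝ), IsProbabilityMeasure ρ ∧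
    ρ.map Prod.fst = μ ∧ ρ.map Prod.snd = ν ∧ r = ∫ p, (p.1 - p.2) ^ 2 ∂ρ }

lemma W2sq_eq (μ ν : Measure ℝ) : W2sq μ ν = sInf (Cset μ ν) := rfl

lemma Cset_nonneg (μ ν : Measure ℝ) : ∀ r ∈ Cset μ ν, (0 : ℝ) ≤ r := by
  rintro r ⟨ρ, _, _, _, rfl⟩
  exact integral_nonneg fun p => sq_nonneg _

lemma W2sq_nonneg (μ ν : Measure ℝ) : 0 ≤ W2sq μ ν :=
  Real.sInf_nonneg (Cset_nonneg μ ν)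

lemma W2_sq_eq (μ ν : Measure ℝ) : W2 μ ν ^ 2 = W2sq μ ν :=
  Real.sq_sqrt (W2sq_nonneg μ ν)

lemma Cset_nonempty (μ ν : Measure ℝ) [IsProbabilityMeasure μ] [IsProbabilityMeasure ν] :
    (Cset μ ν).Nonempty := by
  refine ⟨∫ p : ℝ × ℝ, (p.1 - p.2) ^ 2 ∂(μ.prod ν), μ.prod ν, inferInstance, ?_, ?_, rfl⟩
  · rw [Measure.map_fst_prod]; simp
  · rw [Measure.map_snd_prod]; simp

theorem stmt7 {Ω : Type*} [MeasurableSpace Ω] (P : Measure Ω) [IsProbabilityMeasure P]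
    (X Y : Ω → ℝ) (hX : Measurable X) (hY : Measurable Y)
    (hX2 : MemLp X 2 P) (hY2 : MemLp Y 2 P)
    (hXm : ∫ ω, X ω ∂P = 0) (hYm : ∫ ω, Y ω ∂P = 0)
    (hXv : ∫ ω, (X ω) ^ 2 ∂P = 1) (hYv : ∫ ω, (Y ω) ^ 2 ∂P = 1)
    (hind : IndepFun X Y P) :
    W2 (P.map (fun ω => (X ω + Y ω) / Real.sqrt 2)) (gaussianReal 0 1) ^ 2
      ≤ (W2 (P.map X) (gaussianReal 0 1) ^ 2 + W2 (P.map Y) (gaussianReal 0 1) ^ 2) / 2 := by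
  rw [W2_sq_eq, W2_sq_eq, W2_sq_eq, W2sq_eq, W2sq_eq, W2sq_eq]
  haveI : IsProbabilityMeasure (P.map X) := Measure.isProbabilityMeasure_map hX.aemeasurable
  haveI : IsProbabilityMeasure (P.map Y) := Measure.isProbabilityMeasure_map hY.aemeasurable
  have hμX : MemLp (id : ℝ → ℝ) 2 (P.map X) :=
    (memLp_map_measure_iff aestronglyMeasurable_id hX.aemeasurable).mpr hX2
  have hμY : MemLp (id : ℝ → ℝ) 2 (P.map Y) :=
    (memLp_map_measure_iff aestronglyMeasurable_id hY.aemeasurable).mpr hY2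
  have hμXm : ∫ x, x ∂(P.map X) = 0 := by
    rw [integral_map (f := fun x : ℝ => x) hX.aemeasurable aestronglyMeasurable_id]; exact hXm
  have hμYm : ∫ x, x ∂(P.map Y) = 0 := by
    rw [integral_map (f := fun x : ℝ => x) hY.aemeasurable aestronglyMeasurable_id]; exact hYm
  refine le_of_forall_pos_le_add fun ε hε => ?_
  obtain ⟨r₁, hr₁mem, hr₁lt⟩ :=
    Real.lt_sInf_add_pos (Cset_nonempty (P.map X) (gaussianReal 0 1)) hε
  obtain ⟨r₂, hr₂mem, hr₂lt⟩ :=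
    Real.lt_sInf_add_pos (Cset_nonempty (P.map Y) (gaussianReal 0 1)) hε
  obtain ⟨π₁, hπ₁p, hπ₁f, hπ₁s, hr₁⟩ := hr₁mem
  obtain ⟨π₂, hπ₂p, hπ₂f, hπ₂s, hr₂⟩ := hr₂mem
  haveI := hπ₁p; haveI := hπ₂p
  obtain ⟨ha₁, hz₁⟩ := aux_coupling π₁ hπ₁f hπ₁s hμX aux_memLp_gauss hμXm aux_integral_id_gauss
  obtain ⟨ha₂, hz₂⟩ := aux_coupling π₂ hπ₂f hπ₂s hμY aux_memLp_gauss hμYm aux_integral_id_gauss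
  set T : (ℝ × ℝ) × (ℝ × ℝ) → ℝ × ℝ :=
    fun q => ((q.1.1 + q.2.1) / √2, (q.1.2 + q.2.2) / √2) with hT
  have hTm : Measurable T := by fun_prop
  have marg1 : ((π₁.prod π₂).map T).map Prod.fst
      = P.map (fun ω => (X ω + Y ω) / Real.sqrt 2) := by
    rw [Measure.map_map measurable_fst hTm]
    have h1 : (Prod.fst ∘ T) = (fun uv : ℝ × ℝ => (uv.1 + uv.2) / √2)
        ∘ (Prod.map (Prod.fst : ℝ × ℝ → ℝ) (Prod.fst : ℝ × ℝ → ℝ)) := rfl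
    rw [h1, ← Measure.map_map (by fun_prop) (measurable_fst.prodMap measurable_fst),
      ← Measure.map_prod_map _ _ measurable_fst measurable_fst, hπ₁f, hπ₂f,
      ← (indepFun_iff_map_prod_eq_prod_map_map hX.aemeasurable hY.aemeasurable).mp hind,
      Measure.map_map (by fun_prop) (hX.prodMk hY)]
    rfl
  have marg2 : ((π₁.prod π₂).map T).map Prod.snd = gaussianReal 0 1 := by
    rw [Measure.map_map measurable_snd hTm]
    have h1 : (Prod.snd ∘ T) = (fun uv : ℝ × ℝ => (uv.1 + uv.2) / √2)
        ∘ (Prod.map (Prod.snd : ℝ × ℝ → ℝ) (Prod.snd : ℝ × ℝ → ℝ)) := rfl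
    rw [h1, ← Measure.map_map (by fun_prop) (measurable_snd.prodMap measurable_snd),
      ← Measure.map_prod_map _ _ measurable_snd measurable_snd, hπ₁s, hπ₂s, aux_gauss_conv]
  have cost : ∫ p : ℝ × ℝ, (p.1 - p.2) ^ 2 ∂((π₁.prod π₂).map T) = (r₁ + r₂) / 2 := by
    rw [integral_map (f := fun p : ℝ × ℝ => (p.1 - p.2) ^ 2) hTm.aemeasurable (((measurable_fst.sub measurable_snd).pow_const 2).aestronglyMeasurable)]
    exact (aux_cost π₁ π₂ ha₁ ha₂ hz₁ hz₂).trans (by rw [← hr₁, ← hr₂])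
  have hmem : (r₁ + r₂) / 2 ∈ Cset (P.map (fun ω => (X ω + Y ω) / Real.sqrt 2))
      (gaussianReal 0 1) :=
    ⟨(π₁.prod π₂).map T, Measure.isProbabilityMeasure_map hTm.aemeasurable, marg1, marg2, cost.symm⟩
  have hle : sInf (Cset (P.map (fun ω => (X ω + Y ω) / Real.sqrt 2)) (gaussianReal 0 1))
      ≤ (r₁ + r₂) / 2 := csInf_le ⟨0, Cset_nonneg _ _⟩ hmem
  linarith


end AuxProofs
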